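/- For every ℓ > 0 and every sufficiently large B ≥ ℓ⁴, there is a Knapsack instance with budget B, B^{1/4} large elements of size B^{3/4}, and B small elements of unit size, and n ≥ 4B^{1/4} ln(2B) agents of which a fraction α = 1/(4B^{1/4} ln(2B)) are special, such that the outcome maximizing the smooth Nash welfare Σ_i ln(ℓ + u_i(c)) selects only large elements, yet the special agents could deviate to the small elements and obtain scaled-down utility B^{3/4}/(4 ln(2B)) each, while getting only B^{1/4} in the chosen outcome. -/

import Mathlib

lemma fin_sum_ite_lt_one (n : ℕ) (hn : 0 < n) (F G : ℝ) :
    (∑ i : Fin n, (if (i : ℕ) < 1 then F else G)) = F + ((n : ℝ) - 1) * G := by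
  rw [Finset.sum_ite, Finset.sum_const, Finset.sum_const]
  have h1 : (Finset.univ.filter fun i : Fin n => (i : ℕ) < 1) = {(⟨0, hn⟩ : Fin n)} := by
    ext i
    simp [Fin.ext_iff, Nat.lt_one_iff]
  have h2 := Finset.card_filter_add_card_filter_not
    (s := (Finset.univ : Finset (Fin n))) (p := fun i : Fin n => (i : ℕ) < 1)
  rw [h1] at h2 ⊢
  simp only [Finset.card_singleton, Finset.card_univ, Fintype.card_fin] at h2 ⊢
  have h3 : (Finset.univ.filter fun i : Fin n => ¬ (i : ℕ) < 1).card = n - 1 := by omega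
  rw [h3]
  rw [one_smul, nsmul_eq_mul, Nat.cast_sub hn]
  push_cast
  ring

lemma sum_elim_const {t k : ℕ} (c : Finset (Fin t ⊕ Fin k)) (x y : ℝ) :
    ∑ e ∈ c, Sum.elim (fun _ => x) (fun _ => y) e
      = ((c.filter (fun e => e.isLeft = true)).card : ℝ) * x
        + ((c.filter (fun e => ¬ e.isLeft = true)).card : ℝ) * y := by
  rw [← Finset.sum_filter_add_sum_filter_not c (fun e => e.isLeft = true)]
  congr 1
  · rw [Finset.sum_congr rfl (fun e he => ?_), Finset.sum_const, nsmul_eq_mul]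
    obtain ⟨_, h⟩ := Finset.mem_filter.mp he
    cases e <;> simp_all
  · rw [Finset.sum_congr rfl (fun e he => ?_), Finset.sum_const, nsmul_eq_mul]
    obtain ⟨_, h⟩ := Finset.mem_filter.mp he
    cases e <;> simp_all

set_option maxHeartbeats 1000000 in
lemma core_false (ℓ t a m n : ℝ) (ht : 2 ≤ t) (hl0 : 0 < ℓ) (hlt : ℓ ≤ t)
    (ha0 : 0 ≤ a) (hm0 : 0 ≤ m) (hbud : a * t ^ 3 + m ≤ t ^ 4)
    (hL1 : 1 ≤ Real.log (2 * t ^ 4))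
    (hn : 6 * t * Real.log (2 * t ^ 4) ≤ n)
    (hr : 1 ≤ t - a)
    (hmax : n * Real.log (ℓ + t) ≤ Real.log (ℓ + (a + m)) + (n - 1) * Real.log (ℓ + a)) :
    False := by
  set L := Real.log (2 * t ^ 4) with hLdef
  have ht0 : 0 < t := by linarith
  have h4 : t ^ 4 = t * t ^ 3 := by ring
  have hm2 : m ≤ (t - a) * t ^ 3 := by
    have he : (t - a) * t ^ 3 = t ^ 4 - a * t ^ 3 := by ring
    linarith
  have ht3 : (0:ℝ) < t ^ 3 := by positivity
  have ht4 : (0:ℝ) < t ^ 4 := by positivity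
  have hc3 : (8:ℝ) ≤ t ^ 3 := by
    calc (8:ℝ) = 2 ^ 3 := by norm_num
    _ ≤ t ^ 3 := pow_le_pow_left₀ (by norm_num) ht 3
  have h2t : 2 * t ≤ t ^ 4 := by nlinarith
  have hsum_le : ℓ + (a + m) ≤ 2 * t ^ 4 := by nlinarith
  have hpa : 0 < ℓ + a := by linarith
  have hpt : 0 < ℓ + t := by linarith
  have hpam : 0 < ℓ + (a + m) := by linarith
  have hlog1 : Real.log (ℓ + (a + m)) ≤ L := Real.log_le_log hpam hsum_le
  have hlt1 : 0 ≤ Real.log (ℓ + t) := Real.log_nonneg (by linarith)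
  -- lower bound on log gap
  have hdiv := Real.log_le_sub_one_of_pos (div_pos hpa hpt)
  rw [Real.log_div (ne_of_gt hpa) (ne_of_gt hpt)] at hdiv
  have h7 : (ℓ + a) / (ℓ + t) - 1 = -((t - a) / (ℓ + t)) := by field_simp; ring
  rw [h7] at hdiv
  have h6 : 1 / (2 * t) ≤ (t - a) / (ℓ + t) := by
    rw [div_le_div_iff₀ (by linarith) hpt]
    nlinarith
  have hΔ : 1 / (2 * t) ≤ Real.log (ℓ + t) - Real.log (ℓ + a) := by linarith
  have hn1 : 12 ≤ n := by nlinarith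
  have h8 : (n - 1) * (1 / (2 * t)) ≤ (n - 1) * (Real.log (ℓ + t) - Real.log (ℓ + a)) :=
    mul_le_mul_of_nonneg_left hΔ (by linarith)
  have h9 : (n - 1) * (Real.log (ℓ + t) - Real.log (ℓ + a)) ≤ L := by nlinarith
  have h10 : n - 1 ≤ 2 * t * L := by
    have hinv : 1 / (2 * t) * (2 * t) = 1 := by field_simp
    nlinarith
  nlinarith

set_option maxHeartbeats 2000000 in


/-- Lower bound for smooth Nash welfare on Knapsack instances.  For every smoothing
`ℓ > 0` and all sufficiently large `B = t⁴ ≥ ℓ⁴`, consider the Knapsack instance with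
budget `B`, `B^{1/4} = t` large elements (`Sum.inl`) of size `B^{3/4} = t³`, and
`B = t⁴` small elements (`Sum.inr`) of unit size.  There are `n ≥ 4B^{1/4}·ln(2B)`
agents, of which the first `s` are special with `s/n ≈ 1/(4B^{1/4}·ln(2B))`; all agents
value each large element at `1`, and special agents additionally value each small
element at `1`.  Then every feasible outcome maximizing the smooth Nash welfare
`∑ i, ln(ℓ + u_i(c))` selects only large elements, giving each special agent utility
`B^{1/4} = t`, while deviating to all the small elements would give the special
coalition scaled-down utility `(s/n)·B ≥ B^{3/4}/(8·ln(2B))` each. -/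
theorem smooth_nash_knapsack_lower_bound :
    ∀ ℓ : ℝ, 0 < ℓ →
    ∃ t₀ : ℕ, ∀ t : ℕ, t₀ ≤ t → ℓ ≤ (t : ℝ) →
    ∃ n s : ℕ, 0 < n ∧ 1 ≤ s ∧
      (4 * (t : ℝ) * Real.log (2 * (t : ℝ)^4) ≤ (n : ℝ)) ∧
      ((s : ℝ) / n ≤ 1 / (4 * (t : ℝ) * Real.log (2 * (t : ℝ)^4))) ∧
      (1 / (8 * (t : ℝ) * Real.log (2 * (t : ℝ)^4)) ≤ (s : ℝ) / n) ∧
      (∀ c : Finset (Fin t ⊕ Fin (t^4)),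
        -- feasibility: total size within the budget B = t⁴
        (∑ e ∈ c, (Sum.elim (fun _ => (t : ℝ)^3) (fun _ => (1 : ℝ)) e)) ≤ (t : ℝ)^4 →
        -- c maximizes the smooth Nash welfare over feasible outcomes
        (∀ c' : Finset (Fin t ⊕ Fin (t^4)),
          (∑ e ∈ c', (Sum.elim (fun _ => (t : ℝ)^3) (fun _ => (1 : ℝ)) e)) ≤ (t : ℝ)^4 →
          (∑ i : Fin n, Real.log (ℓ + ∑ e ∈ c',
              (Sum.elim (fun _ => (1 : ℝ))
                (fun _ => if (i : ℕ) < s then (1 : ℝ) else 0) e))) ≤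
          (∑ i : Fin n, Real.log (ℓ + ∑ e ∈ c,
              (Sum.elim (fun _ => (1 : ℝ))
                (fun _ => if (i : ℕ) < s then (1 : ℝ) else 0) e)))) →
        -- conclusion: only large elements are selected,
        (∀ e ∈ c, e.isLeft = true) ∧
        -- each special agent gets utility exactly B^{1/4} = t,
        (∀ i : Fin n, (i : ℕ) < s →
          (∑ e ∈ c, (Sum.elim (fun _ => (1 : ℝ))
              (fun _ => if (i : ℕ) < s then (1 : ℝ) else 0) e)) = (t : ℝ)) ∧
        -- while deviating to all small elements gives scaled utility ≥ B^{3/4}/(8 ln 2B)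
        ((s : ℝ) / n * (t : ℝ)^4 ≥ (t : ℝ)^3 / (8 * Real.log (2 * (t : ℝ)^4)))) := by
  intro ℓ hl0
  refine ⟨2, fun t ht2 hlt => ?_⟩
  have htR : (2:ℝ) ≤ (t:ℝ) := by exact_mod_cast ht2
  set T : ℝ := (t:ℝ) with hT
  have ht0 : (0:ℝ) < T := by linarith
  set L : ℝ := Real.log (2 * T^4) with hLdef
  have h32 : (32:ℝ) ≤ 2 * T^4 := by
    have : (2:ℝ)^4 ≤ T^4 := pow_le_pow_left₀ (by norm_num) htR 4
    linarith
  have hL1 : 1 ≤ L := by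
    rw [hLdef, Real.le_log_iff_exp_le (by linarith)]
    have := Real.exp_one_lt_d9
    linarith
  have hL0 : 0 < L := by linarith
  have htL : (0:ℝ) < T * L := by positivity
  have htL2 : 2 ≤ T * L := by nlinarith
  have hnpos : 0 < ⌈6 * T * L⌉₊ := by rw [Nat.lt_ceil]; push_cast; nlinarith
  set n : ℕ := ⌈6 * T * L⌉₊ with hndef
  have hnge : 6 * T * L ≤ (n : ℝ) := Nat.le_ceil _
  have hnle : ((n : ℝ)) ≤ 8 * T * L := by
    have := Nat.ceil_lt_add_one (show (0:ℝ) ≤ 6 * T * L by positivity)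
    rw [hndef]
    nlinarith
  have hnR : (0:ℝ) < (n : ℝ) := by exact_mod_cast hnpos
  refine ⟨n, 1, hnpos, le_refl 1, by nlinarith, ?_, ?_, ?_⟩
  · rw [Nat.cast_one, div_le_div_iff₀ hnR (by positivity)]
    nlinarith
  · rw [Nat.cast_one, div_le_div_iff₀ (by positivity) hnR]
    nlinarith
  · intro c hfeas hmax
    set a : ℕ := (c.filter (fun e => e.isLeft = true)).card with hadef
    set m : ℕ := (c.filter (fun e => ¬ e.isLeft = true)).card with hmdef
    have hbudR : (a:ℝ) * T^3 + (m:ℝ) ≤ T^4 := by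
      rw [sum_elim_const] at hfeas
      rw [← hadef, ← hmdef] at hfeas
      linarith [hfeas]
    -- the all-large outcome
    set allLarge : Finset (Fin t ⊕ Fin (t^4)) :=
      (Finset.univ : Finset (Fin t)).map ⟨Sum.inl, Sum.inl_injective⟩ with hAL
    have hall : ∀ x y : ℝ, (∑ e ∈ allLarge, Sum.elim (fun _ => x) (fun _ => y) e) = T * x := by
      intro x y
      rw [hAL, Finset.sum_map]
      simp [mul_comm]
      exact Or.inl rfl
    have hALfeas : (∑ e ∈ allLarge, (Sum.elim (fun _ => T^3) (fun _ => (1:ℝ)) e)) ≤ T^4 := by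
      rw [hall]; nlinarith
    have hmax' := hmax allLarge hALfeas
    have hwA : (∑ i : Fin n, Real.log (ℓ + ∑ e ∈ allLarge,
        Sum.elim (fun _ => (1:ℝ)) (fun _ => if (i:ℕ) < 1 then (1:ℝ) else 0) e))
        = (n:ℝ) * Real.log (ℓ + T) := by
      have h1 : ∀ i : Fin n, Real.log (ℓ + ∑ e ∈ allLarge,
          Sum.elim (fun _ => (1:ℝ)) (fun _ => if (i:ℕ) < 1 then (1:ℝ) else 0) e)
          = Real.log (ℓ + T) := by
        intro i
        rw [hall, mul_one]
      rw [Finset.sum_congr rfl (fun i _ => h1 i), Finset.sum_const, Finset.card_univ,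
        Fintype.card_fin, nsmul_eq_mul]
    have hwC : (∑ i : Fin n, Real.log (ℓ + ∑ e ∈ c,
        Sum.elim (fun _ => (1:ℝ)) (fun _ => if (i:ℕ) < 1 then (1:ℝ) else 0) e))
        = Real.log (ℓ + ((a:ℝ) + (m:ℝ))) + ((n:ℝ) - 1) * Real.log (ℓ + (a:ℝ)) := by
      have h1 : ∀ i : Fin n, Real.log (ℓ + ∑ e ∈ c,
          Sum.elim (fun _ => (1:ℝ)) (fun _ => if (i:ℕ) < 1 then (1:ℝ) else 0) e)
          = (if (i:ℕ) < 1 then Real.log (ℓ + ((a:ℝ) + (m:ℝ))) else Real.log (ℓ + (a:ℝ))) := by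
        intro i
        rw [sum_elim_const, ← hadef, ← hmdef]
        split_ifs <;> norm_num
      rw [Finset.sum_congr rfl (fun i _ => h1 i), fin_sum_ite_lt_one n hnpos]
    rw [hwA, hwC] at hmax'
    have haT : (a:ℝ) ≤ T := by nlinarith [hbudR, (Nat.cast_nonneg m : (0:ℝ) ≤ (m:ℝ)), pow_pos ht0 3]
    have hatn : a ≤ t := by
      have h := haT
      rw [hT] at h
      exact_mod_cast h
    have haeq : a = t := by
      by_contra hne
      have halt : a < t := lt_of_le_of_ne hatn hne
      have hr : 1 ≤ T - (a:ℝ) := by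
        have h : ((a:ℝ)) + 1 ≤ (t:ℝ) := by exact_mod_cast halt
        rw [← hT] at h
        linarith
      exact core_false ℓ T (a:ℝ) (m:ℝ) (n:ℝ) htR hl0 hlt (Nat.cast_nonneg a)
        (Nat.cast_nonneg m) hbudR hL1 hnge hr hmax'
    have hmeq : m = 0 := by
      have hTa : (a:ℝ) = T := by rw [haeq]
      have : (m:ℝ) ≤ 0 := by nlinarith [hbudR]
      exact_mod_cast le_antisymm (by exact_mod_cast this) (Nat.zero_le m)
    have hemp : c.filter (fun e => ¬ e.isLeft = true) = ∅ :=
      Finset.card_eq_zero.mp hmeq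
    refine ⟨?_, ?_, ?_⟩
    · intro e he
      by_contra hne
      have : e ∈ c.filter (fun e => ¬ e.isLeft = true) := Finset.mem_filter.mpr ⟨he, hne⟩
      rw [hemp] at this
      exact absurd this (Finset.notMem_empty e)
    · intro i hi
      rw [sum_elim_const, ← hadef, ← hmdef, haeq, hmeq, if_pos hi, ← hT]
      norm_num
    · have h1n : 1/((8:ℝ) * T * L) ≤ 1/(n:ℝ) := one_div_le_one_div_of_le hnR hnle
      rw [Nat.cast_one, ge_iff_le]
      calc T^3/(8*L) = (1/(8*T*L)) * T^4 := by
            field_simp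
        _ ≤ 1/(n:ℝ) * T^4 := mul_le_mul_of_nonneg_right h1n (by positivity)
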